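/- Let V ⊂ ℝ³ be a bounded open set containing the origin and let ρ(x) = |x|. For every integer m ≥ 0 and real a, and every function v smooth on V \ {0} for which the right-hand side is finite, one has Σ_{|α| ≤ m} ‖ρ^{-a+|α|} ∂^α v‖²_{L²(V)} ≤ C Σ_{l ≤ m} |ρ^{-a+l} v|²_{H^l(V)}, where |·|_{H^l} denotes the H^l seminorm (L² norms of all derivatives of exact order l) and C depends only on m, a, and the diameter of V. -/

import Mathlib

open MeasureTheory

noncomputable section

abbrev P3 := ℝ × ℝ × ℝ

def rho3 (p : P3) : ℝ := Real.sqrt (p.1 ^ 2 + p.2.1 ^ 2 + p.2.2 ^ 2)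

def pdx (f : P3 → ℝ) : P3 → ℝ := fun p => fderiv ℝ f p (1, 0, 0)
def pdy (f : P3 → ℝ) : P3 → ℝ := fun p => fderiv ℝ f p (0, 1, 0)
def pdz (f : P3 → ℝ) : P3 → ℝ := fun p => fderiv ℝ f p (0, 0, 1)

def D3 (α : ℕ × ℕ × ℕ) (f : P3 → ℝ) : P3 → ℝ := pdx^[α.1] (pdy^[α.2.1] (pdz^[α.2.2] f))

def wt3 (α : ℕ × ℕ × ℕ) : ℕ := α.1 + α.2.1 + α.2.2

def idx3 (m : ℕ) : Finset (ℕ × ℕ × ℕ) :=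
  ((Finset.range (m+1)) ×ˢ (Finset.range (m+1)) ×ˢ (Finset.range (m+1))).filter
    fun α => wt3 α ≤ m

/-- The multi-indices with |α| = l. -/
def idx3e (l : ℕ) : Finset (ℕ × ℕ × ℕ) :=
  ((Finset.range (l+1)) ×ˢ (Finset.range (l+1)) ×ˢ (Finset.range (l+1))).filter
    fun α => wt3 α = l

/-- Σ_{|α| ≤ m} ‖ρ^{-a+|α|} ∂^α v‖²_{L²(V)}. -/
def WS3 (V : Set P3) (m : ℕ) (a : ℝ) (v : P3 → ℝ) : ℝ :=
  ∑ α ∈ idx3 m, ∫ p in V, (rho3 p ^ ((wt3 α : ℝ) - a) * D3 α v p) ^ 2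

/-- Squared H^l(V) seminorm: Σ_{|β| = l} ‖∂^β w‖²_{L²(V)}. -/
def SN3 (V : Set P3) (l : ℕ) (w : P3 → ℝ) : ℝ :=
  ∑ α ∈ idx3e l, ∫ p in V, (D3 α w p) ^ 2

-- auxiliary defs
def ex : P3 := (1,0,0)
def ey : P3 := (0,1,0)
def ez : P3 := (0,0,1)

def Q3 (p : P3) : ℝ := p.1 ^ 2 + p.2.1 ^ 2 + p.2.2 ^ 2

lemma Q3_nonneg (p : P3) : 0 ≤ Q3 p := by unfold Q3; positivity

lemma Q3_pos {p : P3} (hp : p ≠ 0) : 0 < Q3 p := by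
  have h : p.1 ≠ 0 ∨ p.2.1 ≠ 0 ∨ p.2.2 ≠ 0 := by
    by_contra h; push_neg at h
    exact hp (by ext <;> simp [h.1, h.2.1, h.2.2])
  unfold Q3
  rcases h with h | h | h <;> positivity

lemma rho3_pos {p : P3} (hp : p ≠ 0) : 0 < rho3 p := Real.sqrt_pos.2 (Q3_pos hp)

lemma rho3_nonneg (p : P3) : 0 ≤ rho3 p := Real.sqrt_nonneg _

lemma rho3_rpow_eq (u : ℝ) (p : P3) : rho3 p ^ u = Q3 p ^ (u / 2) := by
  have : rho3 p = Q3 p ^ ((1:ℝ)/2) := Real.sqrt_eq_rpow _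
  rw [this, ← Real.rpow_mul (Q3_nonneg p)]
  ring_nf

lemma abs_fst_le_rho3 (p : P3) : |p.1| ≤ rho3 p := by
  rw [← Real.sqrt_sq_eq_abs]
  exact Real.sqrt_le_sqrt (by nlinarith [sq_nonneg p.2.1, sq_nonneg p.2.2])

lemma abs_sndfst_le_rho3 (p : P3) : |p.2.1| ≤ rho3 p := by
  rw [← Real.sqrt_sq_eq_abs]
  exact Real.sqrt_le_sqrt (by nlinarith [sq_nonneg p.1, sq_nonneg p.2.2])

lemma abs_sndsnd_le_rho3 (p : P3) : |p.2.2| ≤ rho3 p := by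
  rw [← Real.sqrt_sq_eq_abs]
  exact Real.sqrt_le_sqrt (by nlinarith [sq_nonneg p.1, sq_nonneg p.2.1])

-- derivatives of coordinate powers
lemma pow_fst_hasD (n : ℕ) (p : P3) : ∃ D : P3 →L[ℝ] ℝ,
    HasFDerivAt (fun q : P3 => q.1 ^ n) D p ∧
    D ex = n * p.1 ^ (n-1) ∧ D ey = 0 ∧ D ez = 0 := by
  induction n with
  | zero =>
    refine ⟨0, ?_, by simp, by simp, by simp⟩
    simpa using hasFDerivAt_const (1:ℝ) p
  | succ n ih =>
    obtain ⟨D, hD, h1, h2, h3⟩ := ih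
    have hx : HasFDerivAt (fun q : P3 => q.1) (ContinuousLinearMap.fst ℝ ℝ (ℝ × ℝ)) p :=
      hasFDerivAt_fst
    have := hD.mul hx
    refine ⟨_, by simpa [pow_succ, Pi.mul_def] using this, ?_, ?_, ?_⟩
    · simp only [ContinuousLinearMap.add_apply, ContinuousLinearMap.coe_smul',
        Pi.smul_apply, ContinuousLinearMap.coe_fst', h1]
      show p.1 ^ n * (ContinuousLinearMap.fst ℝ ℝ (ℝ × ℝ)) ex + p.1 * (↑n * p.1 ^ (n-1)) = _
      have hex : (ContinuousLinearMap.fst ℝ ℝ (ℝ × ℝ)) ex = 1 := rfl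
      rw [hex]
      cases n with
      | zero => simp
      | succ m =>
        have : p.1 * p.1 ^ (m + 1 - 1) = p.1 ^ (m+1) := by
          simp [pow_succ, mul_comm]
        push_cast
        simp only [Nat.add_sub_cancel] at this ⊢
        nlinarith [this]
    · show p.1 ^ n * (ContinuousLinearMap.fst ℝ ℝ (ℝ × ℝ)) ey + p.1 * D ey = 0
      have : (ContinuousLinearMap.fst ℝ ℝ (ℝ × ℝ)) ey = 0 := rfl
      rw [this, h2]; ring
    · show p.1 ^ n * (ContinuousLinearMap.fst ℝ ℝ (ℝ × ℝ)) ez + p.1 * D ez = 0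
      have : (ContinuousLinearMap.fst ℝ ℝ (ℝ × ℝ)) ez = 0 := rfl
      rw [this, h3]; ring

lemma pow_sndfst_hasD (n : ℕ) (p : P3) : ∃ D : P3 →L[ℝ] ℝ,
    HasFDerivAt (fun q : P3 => q.2.1 ^ n) D p ∧
    D ex = 0 ∧ D ey = n * p.2.1 ^ (n-1) ∧ D ez = 0 := by
  induction n with
  | zero =>
    refine ⟨0, ?_, by simp, by simp, by simp⟩
    simpa using hasFDerivAt_const (1:ℝ) p
  | succ n ih =>
    obtain ⟨D, hD, h1, h2, h3⟩ := ih
    have hy : HasFDerivAt (fun q : P3 => q.2.1)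
        ((ContinuousLinearMap.fst ℝ ℝ ℝ).comp (ContinuousLinearMap.snd ℝ ℝ (ℝ × ℝ))) p := by
      exact (hasFDerivAt_fst (𝕜 := ℝ)).comp p (hasFDerivAt_snd (𝕜 := ℝ))
    have := hD.mul hy
    refine ⟨_, by simpa [pow_succ, Pi.mul_def] using this, ?_, ?_, ?_⟩
    · show p.2.1 ^ n * ((ContinuousLinearMap.fst ℝ ℝ ℝ).comp (ContinuousLinearMap.snd ℝ ℝ (ℝ × ℝ))) ex
        + p.2.1 * D ex = 0
      have : ((ContinuousLinearMap.fst ℝ ℝ ℝ).comp (ContinuousLinearMap.snd ℝ ℝ (ℝ × ℝ))) ex = 0 := rfl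
      rw [this, h1]; ring
    · show p.2.1 ^ n * ((ContinuousLinearMap.fst ℝ ℝ ℝ).comp (ContinuousLinearMap.snd ℝ ℝ (ℝ × ℝ))) ey
        + p.2.1 * D ey = (↑(n+1)) * p.2.1 ^ (n + 1 - 1)
      have hey : ((ContinuousLinearMap.fst ℝ ℝ ℝ).comp (ContinuousLinearMap.snd ℝ ℝ (ℝ × ℝ))) ey = 1 := rfl
      rw [hey, h2]
      cases n with
      | zero => simp
      | succ m =>
        have : p.2.1 * p.2.1 ^ m = p.2.1 ^ (m+1) := by simp [pow_succ, mul_comm]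
        push_cast
        simp only [Nat.add_sub_cancel] at *
        nlinarith [this]
    · show p.2.1 ^ n * ((ContinuousLinearMap.fst ℝ ℝ ℝ).comp (ContinuousLinearMap.snd ℝ ℝ (ℝ × ℝ))) ez
        + p.2.1 * D ez = 0
      have : ((ContinuousLinearMap.fst ℝ ℝ ℝ).comp (ContinuousLinearMap.snd ℝ ℝ (ℝ × ℝ))) ez = 0 := rfl
      rw [this, h3]; ring

lemma pow_sndsnd_hasD (n : ℕ) (p : P3) : ∃ D : P3 →L[ℝ] ℝ,
    HasFDerivAt (fun q : P3 => q.2.2 ^ n) D p ∧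
    D ex = 0 ∧ D ey = 0 ∧ D ez = n * p.2.2 ^ (n-1) := by
  induction n with
  | zero =>
    refine ⟨0, ?_, by simp, by simp, by simp⟩
    simpa using hasFDerivAt_const (1:ℝ) p
  | succ n ih =>
    obtain ⟨D, hD, h1, h2, h3⟩ := ih
    have hz : HasFDerivAt (fun q : P3 => q.2.2)
        ((ContinuousLinearMap.snd ℝ ℝ ℝ).comp (ContinuousLinearMap.snd ℝ ℝ (ℝ × ℝ))) p := by
      exact (hasFDerivAt_snd (𝕜 := ℝ)).comp p (hasFDerivAt_snd (𝕜 := ℝ))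
    have := hD.mul hz
    refine ⟨_, by simpa [pow_succ, Pi.mul_def] using this, ?_, ?_, ?_⟩
    · show p.2.2 ^ n * ((ContinuousLinearMap.snd ℝ ℝ ℝ).comp (ContinuousLinearMap.snd ℝ ℝ (ℝ × ℝ))) ex
        + p.2.2 * D ex = 0
      have : ((ContinuousLinearMap.snd ℝ ℝ ℝ).comp (ContinuousLinearMap.snd ℝ ℝ (ℝ × ℝ))) ex = 0 := rfl
      rw [this, h1]; ring
    · show p.2.2 ^ n * ((ContinuousLinearMap.snd ℝ ℝ ℝ).comp (ContinuousLinearMap.snd ℝ ℝ (ℝ × ℝ))) ey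
        + p.2.2 * D ey = 0
      have : ((ContinuousLinearMap.snd ℝ ℝ ℝ).comp (ContinuousLinearMap.snd ℝ ℝ (ℝ × ℝ))) ey = 0 := rfl
      rw [this, h2]; ring
    · show p.2.2 ^ n * ((ContinuousLinearMap.snd ℝ ℝ ℝ).comp (ContinuousLinearMap.snd ℝ ℝ (ℝ × ℝ))) ez
        + p.2.2 * D ez = (↑(n+1)) * p.2.2 ^ (n + 1 - 1)
      have hez : ((ContinuousLinearMap.snd ℝ ℝ ℝ).comp (ContinuousLinearMap.snd ℝ ℝ (ℝ × ℝ))) ez = 1 := rfl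
      rw [hez, h3]
      cases n with
      | zero => simp
      | succ m =>
        have : p.2.2 * p.2.2 ^ m = p.2.2 ^ (m+1) := by simp [pow_succ, mul_comm]
        push_cast
        simp only [Nat.add_sub_cancel] at *
        nlinarith [this]

lemma rho3_rpow_hasD (u : ℝ) {p : P3} (hp : p ≠ 0) : ∃ D : P3 →L[ℝ] ℝ,
    HasFDerivAt (fun q : P3 => rho3 q ^ u) D p ∧
    D ex = u * p.1 * rho3 p ^ (u-2) ∧
    D ey = u * p.2.1 * rho3 p ^ (u-2) ∧
    D ez = u * p.2.2 * rho3 p ^ (u-2) := by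
  obtain ⟨Dx, hDx, hx1, hx2, hx3⟩ := pow_fst_hasD 2 p
  obtain ⟨Dy, hDy, hy1, hy2, hy3⟩ := pow_sndfst_hasD 2 p
  obtain ⟨Dz, hDz, hz1, hz2, hz3⟩ := pow_sndsnd_hasD 2 p
  have hQ : HasFDerivAt Q3 (Dx + Dy + Dz) p := ((hDx.add hDy).add hDz)
  have hQne : Q3 p ≠ 0 := ne_of_gt (Q3_pos hp)
  have h := hQ.rpow_const (p := u/2) (Or.inl hQne)
  have hfe : (fun q : P3 => rho3 q ^ u) = fun q : P3 => Q3 q ^ (u/2) := by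
    funext q; exact rho3_rpow_eq u q
  have hrw : Q3 p ^ (u / 2 - 1) = rho3 p ^ (u - 2) := by
    rw [rho3_rpow_eq]
    congr 1; ring
  refine ⟨_, by rw [hfe]; exact h, ?_, ?_, ?_⟩
  · simp only [ContinuousLinearMap.coe_smul', Pi.smul_apply, ContinuousLinearMap.add_apply,
      smul_eq_mul, hx1, hy1, hz1, hrw]
    push_cast; ring
  · simp only [ContinuousLinearMap.coe_smul', Pi.smul_apply, ContinuousLinearMap.add_apply,
      smul_eq_mul, hx2, hy2, hz2, hrw]
    push_cast; ring
  · simp only [ContinuousLinearMap.coe_smul', Pi.smul_apply, ContinuousLinearMap.add_apply,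
      smul_eq_mul, hx3, hy3, hz3, hrw]
    push_cast; ring

def mono (e : ℕ × ℕ × ℕ) (p : P3) : ℝ := p.1 ^ e.1 * p.2.1 ^ e.2.1 * p.2.2 ^ e.2.2

lemma mono_hasD (e : ℕ × ℕ × ℕ) (p : P3) : ∃ D : P3 →L[ℝ] ℝ,
    HasFDerivAt (mono e) D p ∧
    D ex = e.1 * p.1 ^ (e.1-1) * p.2.1 ^ e.2.1 * p.2.2 ^ e.2.2 ∧
    D ey = p.1 ^ e.1 * e.2.1 * p.2.1 ^ (e.2.1-1) * p.2.2 ^ e.2.2 ∧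
    D ez = p.1 ^ e.1 * p.2.1 ^ e.2.1 * e.2.2 * p.2.2 ^ (e.2.2-1) := by
  obtain ⟨a, b, k⟩ := e
  obtain ⟨Dx, hDx, hx1, hx2, hx3⟩ := pow_fst_hasD a p
  obtain ⟨Dy, hDy, hy1, hy2, hy3⟩ := pow_sndfst_hasD b p
  obtain ⟨Dz, hDz, hz1, hz2, hz3⟩ := pow_sndsnd_hasD k p
  have h := (hDx.mul hDy).mul hDz
  refine ⟨_, h, ?_, ?_, ?_⟩
  · simp only [ContinuousLinearMap.add_apply, ContinuousLinearMap.coe_smul', Pi.smul_apply,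
      smul_eq_mul, hx1, hy1, hz1]
    ring
  · simp only [ContinuousLinearMap.add_apply, ContinuousLinearMap.coe_smul', Pi.smul_apply,
      smul_eq_mul, hx2, hy2, hz2]
    ring
  · simp only [ContinuousLinearMap.add_apply, ContinuousLinearMap.coe_smul', Pi.smul_apply,
      smul_eq_mul, hx3, hy3, hz3, Pi.mul_apply]
    ring

def term (s : ℝ) (j : ℕ) (t : ℝ × (ℕ × ℕ × ℕ)) (p : P3) : ℝ :=
  t.1 * mono t.2 p * rho3 p ^ (s - (j:ℝ) - (wt3 t.2 : ℝ))

def dX (s : ℝ) (j : ℕ) (t : ℝ × (ℕ × ℕ × ℕ)) : List (ℝ × (ℕ × ℕ × ℕ)) :=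
  [(t.1 * t.2.1, (t.2.1 - 1, t.2.2.1, t.2.2.2)),
   (t.1 * (s - (j:ℝ) - (wt3 t.2 : ℝ)), (t.2.1 + 1, t.2.2.1, t.2.2.2))]

def dY (s : ℝ) (j : ℕ) (t : ℝ × (ℕ × ℕ × ℕ)) : List (ℝ × (ℕ × ℕ × ℕ)) :=
  [(t.1 * t.2.2.1, (t.2.1, t.2.2.1 - 1, t.2.2.2)),
   (t.1 * (s - (j:ℝ) - (wt3 t.2 : ℝ)), (t.2.1, t.2.2.1 + 1, t.2.2.2))]

def dZ (s : ℝ) (j : ℕ) (t : ℝ × (ℕ × ℕ × ℕ)) : List (ℝ × (ℕ × ℕ × ℕ)) :=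
  [(t.1 * t.2.2.2, (t.2.1, t.2.2.1, t.2.2.2 - 1)),
   (t.1 * (s - (j:ℝ) - (wt3 t.2 : ℝ)), (t.2.1, t.2.2.1, t.2.2.2 + 1))]

lemma term_hasD (s : ℝ) (j : ℕ) (t : ℝ × (ℕ × ℕ × ℕ)) {p : P3} (hp : p ≠ 0) :
    ∃ D : P3 →L[ℝ] ℝ, HasFDerivAt (fun q => term s j t q) D p ∧
      D ex = ((dX s j t).map (fun t' => term s (j+1) t' p)).sum ∧
      D ey = ((dY s j t).map (fun t' => term s (j+1) t' p)).sum ∧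
      D ez = ((dZ s j t).map (fun t' => term s (j+1) t' p)).sum := by
  obtain ⟨c, a, b, k⟩ := t
  obtain ⟨Dm, hDm, hm1, hm2, hm3⟩ := mono_hasD (a, b, k) p
  obtain ⟨Dr, hDr, hr1, hr2, hr3⟩ := rho3_rpow_hasD (s - (j:ℝ) - (wt3 ((a,b,k):ℕ×ℕ×ℕ) : ℝ)) hp
  have h := (hDm.const_mul c).mul hDr
  refine ⟨_, h, ?_, ?_, ?_⟩
  · simp only [ContinuousLinearMap.add_apply, ContinuousLinearMap.coe_smul', Pi.smul_apply,
      smul_eq_mul, hr1, hm1, dX, term, mono, wt3, List.map_cons, List.map_nil, List.sum_cons,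
      List.sum_nil, add_zero]
    rcases a with _ | a'
    · push_cast
      ring_nf
    · simp only [Nat.succ_sub_one]
      push_cast
      ring_nf
  · simp only [ContinuousLinearMap.add_apply, ContinuousLinearMap.coe_smul', Pi.smul_apply,
      smul_eq_mul, hr2, hm2, dY, term, mono, wt3, List.map_cons, List.map_nil, List.sum_cons,
      List.sum_nil, add_zero]
    rcases b with _ | b'
    · push_cast
      ring_nf
    · simp only [Nat.succ_sub_one]
      push_cast
      ring_nf
  · simp only [ContinuousLinearMap.add_apply, ContinuousLinearMap.coe_smul', Pi.smul_apply,
      smul_eq_mul, hr3, hm3, dZ, term, mono, wt3, List.map_cons, List.map_nil, List.sum_cons,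
      List.sum_nil, add_zero]
    rcases k with _ | k'
    · push_cast
      ring_nf
    · simp only [Nat.succ_sub_one]
      push_cast
      ring_nf

def SymRep (s : ℝ) (j : ℕ) (L : List (ℝ × (ℕ × ℕ × ℕ))) (p : P3) : ℝ :=
  (L.map (fun t => term s j t p)).sum

@[simp] lemma SymRep_nil (s : ℝ) (j : ℕ) (p : P3) : SymRep s j [] p = 0 := rfl

@[simp] lemma SymRep_cons (s : ℝ) (j : ℕ) (t : ℝ × (ℕ × ℕ × ℕ)) (L : List (ℝ × (ℕ × ℕ × ℕ)))
    (p : P3) : SymRep s j (t :: L) p = term s j t p + SymRep s j L p := by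
  simp [SymRep]

lemma SymRep_append (s : ℝ) (j : ℕ) (L1 L2 : List (ℝ × (ℕ × ℕ × ℕ))) (p : P3) :
    SymRep s j (L1 ++ L2) p = SymRep s j L1 p + SymRep s j L2 p := by
  simp [SymRep]

def DL (d : Fin 3) (s : ℝ) (j : ℕ) (L : List (ℝ × (ℕ × ℕ × ℕ))) : List (ℝ × (ℕ × ℕ × ℕ)) :=
  L.flatMap (fun t => match d with | 0 => dX s j t | 1 => dY s j t | 2 => dZ s j t)

def dir3 (d : Fin 3) : P3 := match d with | 0 => ex | 1 => ey | 2 => ez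

lemma symRep_hasD (s : ℝ) (j : ℕ) (L : List (ℝ × (ℕ × ℕ × ℕ))) {p : P3} (hp : p ≠ 0) :
    ∃ D : P3 →L[ℝ] ℝ, HasFDerivAt (fun q => SymRep s j L q) D p ∧
      ∀ d : Fin 3, D (dir3 d) = SymRep s (j+1) (DL d s j L) p := by
  induction L with
  | nil =>
    refine ⟨0, ?_, ?_⟩
    · simpa using hasFDerivAt_const (0:ℝ) p
    · intro d; simp [DL]
  | cons t L ih =>
    obtain ⟨D, hD, hDval⟩ := ih
    obtain ⟨Dt, hDt, h1, h2, h3⟩ := term_hasD s j t hp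
    refine ⟨Dt + D, ?_, ?_⟩
    · have := hDt.add hD
      have heq : (fun q => term s j t q + SymRep s j L q) = fun q => SymRep s j (t :: L) q := by
        funext q; simp
      simp only [Pi.add_def] at this; rwa [heq] at this
    · intro d
      have hbind : DL d s j (t :: L) =
          (match d with | 0 => dX s j t | 1 => dY s j t | 2 => dZ s j t) ++ DL d s j L := by
        simp [DL]; fin_cases d <;> rfl
      rw [ContinuousLinearMap.add_apply, hDval d, hbind, SymRep_append]
      congr 1
      fin_cases d
      · simpa [SymRep, dir3] using h1
      · simpa [SymRep, dir3] using h2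
      · simpa [SymRep, dir3] using h3

lemma mono_abs_le (e : ℕ × ℕ × ℕ) (p : P3) : |mono e p| ≤ rho3 p ^ ((wt3 e : ℕ) : ℝ) := by
  obtain ⟨a, b, k⟩ := e
  have hx : |p.1| ^ a ≤ rho3 p ^ a := pow_le_pow_left₀ (abs_nonneg _) (abs_fst_le_rho3 p) a
  have hy : |p.2.1| ^ b ≤ rho3 p ^ b := pow_le_pow_left₀ (abs_nonneg _) (abs_sndfst_le_rho3 p) b
  have hz : |p.2.2| ^ k ≤ rho3 p ^ k := pow_le_pow_left₀ (abs_nonneg _) (abs_sndsnd_le_rho3 p) k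
  have : |mono (a,b,k) p| = |p.1|^a * |p.2.1|^b * |p.2.2|^k := by
    simp [mono, abs_mul, abs_pow]
  rw [this, Real.rpow_natCast]
  have h1 : |p.1|^a * |p.2.1|^b * |p.2.2|^k ≤ rho3 p ^ a * rho3 p ^ b * rho3 p ^ k := by
    have n1 : (0:ℝ) ≤ rho3 p ^ a := pow_nonneg (rho3_nonneg p) _
    have n2 : (0:ℝ) ≤ rho3 p ^ b := pow_nonneg (rho3_nonneg p) _
    have n3 : (0:ℝ) ≤ rho3 p ^ k := pow_nonneg (rho3_nonneg p) _
    have m1 : (0:ℝ) ≤ |p.1|^a := pow_nonneg (abs_nonneg _) _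
    have m2 : (0:ℝ) ≤ |p.2.1|^b := pow_nonneg (abs_nonneg _) _
    exact mul_le_mul (mul_le_mul hx hy m2 n1) hz (pow_nonneg (abs_nonneg _) _) (mul_nonneg n1 n2)
  calc |p.1|^a * |p.2.1|^b * |p.2.2|^k ≤ rho3 p ^ a * rho3 p ^ b * rho3 p ^ k := h1
    _ = rho3 p ^ (wt3 (a,b,k)) := by rw [wt3, ← pow_add, ← pow_add]

lemma symRep_bound (s : ℝ) (j : ℕ) (L : List (ℝ × (ℕ × ℕ × ℕ))) :
    ∃ C : ℝ, 0 ≤ C ∧ ∀ p : P3, p ≠ 0 → |SymRep s j L p| ≤ C * rho3 p ^ (s - (j:ℝ)) := by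
  induction L with
  | nil => exact ⟨0, le_refl _, fun p hp => by simp⟩
  | cons t L ih =>
    obtain ⟨C, hC, hCb⟩ := ih
    refine ⟨|t.1| + C, by positivity, fun p hp => ?_⟩
    have hrpos : (0:ℝ) < rho3 p := rho3_pos hp
    have ht : |term s j t p| ≤ |t.1| * rho3 p ^ (s - (j:ℝ)) := by
      have : |term s j t p| = |t.1| * |mono t.2 p| * rho3 p ^ (s - (j:ℝ) - (wt3 t.2 : ℝ)) := by
        rw [term, abs_mul, abs_mul, abs_of_nonneg (Real.rpow_nonneg (le_of_lt hrpos) _)]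
      rw [this]
      have h1 : |t.1| * |mono t.2 p| * rho3 p ^ (s - (j:ℝ) - (wt3 t.2 : ℝ)) ≤
          |t.1| * (rho3 p ^ ((wt3 t.2 : ℕ) : ℝ)) * rho3 p ^ (s - (j:ℝ) - (wt3 t.2 : ℝ)) := by
        have := mono_abs_le t.2 p
        have hrn : (0:ℝ) ≤ rho3 p ^ (s - (j:ℝ) - (wt3 t.2 : ℝ)) := Real.rpow_nonneg (le_of_lt hrpos) _
        exact mul_le_mul_of_nonneg_right (mul_le_mul_of_nonneg_left this (abs_nonneg _)) hrn
      refine h1.trans (le_of_eq ?_)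
      rw [mul_assoc, ← Real.rpow_add hrpos]
      ring_nf
    calc |SymRep s j (t :: L) p| ≤ |term s j t p| + |SymRep s j L p| := by
          rw [SymRep_cons]; exact abs_add_le _ _
      _ ≤ |t.1| * rho3 p ^ (s - (j:ℝ)) + C * rho3 p ^ (s - (j:ℝ)) := by
          gcongr; exact hCb p hp
      _ = (|t.1| + C) * rho3 p ^ (s - (j:ℝ)) := by ring

-- smoothness of directional derivatives on open sets
lemma contDiffOn_pd {O : Set P3} (hO : IsOpen O) {f : P3 → ℝ}
    (hf : ContDiffOn ℝ (⊤:ℕ∞) f O) (e : P3) :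
    ContDiffOn ℝ (⊤:ℕ∞) (fun p => fderiv ℝ f p e) O := by
  have h1 : ContDiffOn ℝ (⊤:ℕ∞) (fderiv ℝ f) O := by
    exact hf.fderiv_of_isOpen (m := ((⊤:ℕ∞) : WithTop ℕ∞)) hO (by norm_cast)
  exact h1.clm_apply contDiffOn_const

lemma contDiffOn_pdx {O : Set P3} (hO : IsOpen O) {f : P3 → ℝ}
    (hf : ContDiffOn ℝ (⊤:ℕ∞) f O) : ContDiffOn ℝ (⊤:ℕ∞) (pdx f) O :=
  contDiffOn_pd hO hf _

lemma contDiffOn_pdy {O : Set P3} (hO : IsOpen O) {f : P3 → ℝ}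
    (hf : ContDiffOn ℝ (⊤:ℕ∞) f O) : ContDiffOn ℝ (⊤:ℕ∞) (pdy f) O :=
  contDiffOn_pd hO hf _

lemma contDiffOn_pdz {O : Set P3} (hO : IsOpen O) {f : P3 → ℝ}
    (hf : ContDiffOn ℝ (⊤:ℕ∞) f O) : ContDiffOn ℝ (⊤:ℕ∞) (pdz f) O :=
  contDiffOn_pd hO hf _

lemma contDiffOn_D3 {O : Set P3} (hO : IsOpen O) {f : P3 → ℝ}
    (hf : ContDiffOn ℝ (⊤:ℕ∞) f O) (α : ℕ × ℕ × ℕ) :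
    ContDiffOn ℝ (⊤:ℕ∞) (D3 α f) O := by
  obtain ⟨a, b, k⟩ := α
  have hz : ∀ n g, ContDiffOn ℝ (⊤:ℕ∞) g O → ContDiffOn ℝ (⊤:ℕ∞) (pdz^[n] g) O := by
    intro n
    induction n with
    | zero => intro g hg; simpa using hg
    | succ n ih =>
      intro g hg
      rw [Function.iterate_succ_apply']
      exact contDiffOn_pdz hO (ih g hg)
  have hy : ∀ n g, ContDiffOn ℝ (⊤:ℕ∞) g O → ContDiffOn ℝ (⊤:ℕ∞) (pdy^[n] g) O := by
    intro n
    induction n with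
    | zero => intro g hg; simpa using hg
    | succ n ih =>
      intro g hg
      rw [Function.iterate_succ_apply']
      exact contDiffOn_pdy hO (ih g hg)
  have hx : ∀ n g, ContDiffOn ℝ (⊤:ℕ∞) g O → ContDiffOn ℝ (⊤:ℕ∞) (pdx^[n] g) O := by
    intro n
    induction n with
    | zero => intro g hg; simpa using hg
    | succ n ih =>
      intro g hg
      rw [Function.iterate_succ_apply']
      exact contDiffOn_pdx hO (ih g hg)
  exact hx a _ (hy b _ (hz k _ hf))

lemma D3_succ_x (a b k : ℕ) (f : P3 → ℝ) : D3 (a+1, b, k) f = pdx (D3 (a, b, k) f) := by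
  simp only [D3]
  exact Function.iterate_succ_apply' pdx a _

lemma D3_succ_y (b k : ℕ) (f : P3 → ℝ) : D3 (0, b+1, k) f = pdy (D3 (0, b, k) f) := by
  simp only [D3, Function.iterate_zero, id]
  exact Function.iterate_succ_apply' pdy b _

lemma D3_succ_z (k : ℕ) (f : P3 → ℝ) : D3 (0, 0, k+1) f = pdz (D3 (0, 0, k) f) := by
  simp only [D3, Function.iterate_zero, id]
  exact Function.iterate_succ_apply' pdz k _

@[simp] lemma D3_zero (f : P3 → ℝ) : D3 (0, 0, 0) f = f := rfl

-- bump in direction d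
def bump3 (d : Fin 3) (γ : ℕ × ℕ × ℕ) : ℕ × ℕ × ℕ :=
  match d with
  | 0 => (γ.1 + 1, γ.2.1, γ.2.2)
  | 1 => (γ.1, γ.2.1 + 1, γ.2.2)
  | 2 => (γ.1, γ.2.1, γ.2.2 + 1)

def pd3 (d : Fin 3) : (P3 → ℝ) → P3 → ℝ := match d with | 0 => pdx | 1 => pdy | 2 => pdz

lemma pd3_eq_fderiv (d : Fin 3) (f : P3 → ℝ) (p : P3) :
    pd3 d f p = fderiv ℝ f p (dir3 d) := by
  fin_cases d <;> rfl

lemma D3_bump (d : Fin 3) (γ : ℕ × ℕ × ℕ) (f : P3 → ℝ)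
    (h1 : d.val ≥ 1 → γ.1 = 0) (h2 : d.val ≥ 2 → γ.2.1 = 0) :
    D3 (bump3 d γ) f = pd3 d (D3 γ f) := by
  obtain ⟨a, b, k⟩ := γ
  fin_cases d
  · exact D3_succ_x a b k f
  · have ha : a = 0 := h1 (by norm_num)
    subst ha
    exact D3_succ_y b k f
  · have ha : a = 0 := h1 (by norm_num)
    have hb : b = 0 := h2 (by norm_num)
    subst ha; subst hb
    exact D3_succ_z k f

lemma diffAt_of_contDiffOnTop {O : Set P3} (hO : IsOpen O) {f : P3 → ℝ}
    (hf : ContDiffOn ℝ (⊤:ℕ∞) f O) {p : P3} (hp : p ∈ O) : DifferentiableAt ℝ f p := by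
  refine (hf.contDiffAt (hO.mem_nhds hp)).differentiableAt ?_
  norm_cast

abbrev Item := ℕ × List (ℝ × (ℕ × ℕ × ℕ)) × (ℕ × ℕ × ℕ)

def itemF (v : P3 → ℝ) (s : ℝ) (t : Item) (p : P3) : ℝ :=
  SymRep s t.1 t.2.1 p * D3 t.2.2 v p

def itemSum (v : P3 → ℝ) (s : ℝ) (L : List Item) (p : P3) : ℝ :=
  (L.map (fun t => itemF v s t p)).sum

@[simp] lemma itemSum_nil (v : P3 → ℝ) (s : ℝ) (p : P3) : itemSum v s [] p = 0 := rfl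

@[simp] lemma itemSum_cons (v : P3 → ℝ) (s : ℝ) (t : Item) (L : List Item) (p : P3) :
    itemSum v s (t :: L) p = itemF v s t p + itemSum v s L p := by simp [itemSum]

lemma itemSum_append (v : P3 → ℝ) (s : ℝ) (L1 L2 : List Item) (p : P3) :
    itemSum v s (L1 ++ L2) p = itemSum v s L1 p + itemSum v s L2 p := by simp [itemSum]

def NL (d : Fin 3) (s : ℝ) (L : List Item) : List Item :=
  L.flatMap (fun t => [(t.1 + 1, DL d s t.1 t.2.1, t.2.2), (t.1, t.2.1, bump3 d t.2.2)])

lemma itemSum_hasD {O : Set P3} (hO : IsOpen O) {v : P3 → ℝ}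
    (hv : ContDiffOn ℝ (⊤:ℕ∞) v O) (s : ℝ) (d : Fin 3) (L : List Item) {p : P3}
    (hp : p ∈ O) (hp0 : p ≠ 0)
    (hL : ∀ t ∈ L, (d.val ≥ 1 → t.2.2.1 = 0) ∧ (d.val ≥ 2 → t.2.2.2.1 = 0)) :
    ∃ D : P3 →L[ℝ] ℝ, HasFDerivAt (fun q => itemSum v s L q) D p ∧
      D (dir3 d) = itemSum v s (NL d s L) p := by
  induction L with
  | nil =>
    refine ⟨0, ?_, by simp [NL]⟩
    simpa using hasFDerivAt_const (0:ℝ) p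
  | cons t L ih =>
    obtain ⟨D, hD, hDval⟩ := ih (fun t' ht' => hL t' (List.mem_cons_of_mem _ ht'))
    obtain ⟨j, M, γ⟩ := t
    obtain ⟨DM, hDM, hDMval⟩ := symRep_hasD s j M hp0
    have hγ : DifferentiableAt ℝ (D3 γ v) p :=
      diffAt_of_contDiffOnTop hO (contDiffOn_D3 hO hv γ) hp
    have hmul := hDM.mul hγ.hasFDerivAt
    have hsum := hmul.add hD
    have hfe : (fun q => SymRep s j M q * D3 γ v q + itemSum v s L q)
        = fun q => itemSum v s ((j, M, γ) :: L) q := by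
      funext q; simp [itemF]
    simp only [Pi.add_def, Pi.mul_def] at hsum; rw [hfe] at hsum
    refine ⟨_, hsum, ?_⟩
    have hc1 : (d.val ≥ 1 → γ.1 = 0) := (hL _ List.mem_cons_self).1
    have hc2 : (d.val ≥ 2 → γ.2.1 = 0) := (hL _ List.mem_cons_self).2
    have hbump : fderiv ℝ (D3 γ v) p (dir3 d) = D3 (bump3 d γ) v p := by
      rw [← pd3_eq_fderiv, ← D3_bump d γ v hc1 hc2]
    have hNL : NL d s ((j, M, γ) :: L)
        = (j + 1, DL d s j M, γ) :: (j, M, bump3 d γ) :: NL d s L := by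
      simp [NL]
    rw [hNL]
    simp only [ContinuousLinearMap.add_apply, ContinuousLinearMap.coe_smul', Pi.smul_apply,
      smul_eq_mul, hDval, hbump, hDMval d, itemSum_cons, itemF]
    ring

def dmono (d : Fin 3) : ℕ × ℕ × ℕ := bump3 d (0, 0, 0)

def ExpInv (α : ℕ × ℕ × ℕ) (L : List Item) : Prop :=
  ∀ t ∈ L, 1 ≤ t.1 ∧ t.1 + wt3 t.2.2 = wt3 α ∧ t.2.2.1 ≤ α.1 ∧
    t.2.2.2.1 ≤ α.2.1 ∧ t.2.2.2.2 ≤ α.2.2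

lemma exp_step {O : Set P3} (hO : IsOpen O) (hO0 : ∀ p ∈ O, p ≠ (0:P3))
    (s : ℝ) (α : ℕ × ℕ × ℕ) (d : Fin 3)
    (hα1 : d.val ≥ 1 → α.1 = 0) (hα2 : d.val ≥ 2 → α.2.1 = 0)
    (L : List Item) (hLinv : ExpInv α L)
    (hexp : ∀ v : P3 → ℝ, ContDiffOn ℝ (⊤:ℕ∞) v O → ∀ p ∈ O,
      D3 α (fun q => rho3 q ^ s * v q) p
      = rho3 p ^ s * D3 α v p + itemSum v s L p) :
    ∃ L' : List Item, ExpInv (bump3 d α) L' ∧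
      ∀ v : P3 → ℝ, ContDiffOn ℝ (⊤:ℕ∞) v O → ∀ p ∈ O,
        D3 (bump3 d α) (fun q => rho3 q ^ s * v q) p
        = rho3 p ^ s * D3 (bump3 d α) v p + itemSum v s L' p := by
  refine ⟨(1, [(s, dmono d)], α) :: NL d s L, ?_, ?_⟩
  · -- invariant
    intro t ht
    rcases List.mem_cons.1 ht with rfl | ht
    · refine ⟨le_refl _, ?_, ?_, ?_, ?_⟩ <;> (fin_cases d <;> simp [bump3, wt3] <;> omega)
    · rw [NL, List.mem_flatMap] at ht
      obtain ⟨t0, ht0, htmem⟩ := ht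
      obtain ⟨h1, h2, h3, h4, h5⟩ := hLinv t0 ht0
      simp only [List.mem_cons, List.mem_singleton, List.not_mem_nil, or_false] at htmem
      rcases htmem with rfl | rfl
      · refine ⟨by omega, ?_, ?_, ?_, ?_⟩ <;> (fin_cases d <;> simp [bump3, wt3] at * <;> omega)
      · refine ⟨h1, ?_, ?_, ?_, ?_⟩ <;> (fin_cases d <;> simp [bump3, wt3] at * <;> omega)
  · -- expansion
    intro v hv p hp
    have hp0 : p ≠ 0 := hO0 p hp
    have hrw : D3 (bump3 d α) (fun q => rho3 q ^ s * v q) p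
        = fderiv ℝ (D3 α (fun q => rho3 q ^ s * v q)) p (dir3 d) := by
      rw [D3_bump d α _ hα1 hα2, pd3_eq_fderiv]
    -- the representative function
    obtain ⟨Dr, hDr, hrx, hry, hrz⟩ := rho3_rpow_hasD s hp0
    have hA : DifferentiableAt ℝ (D3 α v) p :=
      diffAt_of_contDiffOnTop hO (contDiffOn_D3 hO hv α) hp
    have hLcond : ∀ t ∈ L, (d.val ≥ 1 → t.2.2.1 = 0) ∧ (d.val ≥ 2 → t.2.2.2.1 = 0) := by
      intro t ht
      obtain ⟨h1, h2, h3, h4, h5⟩ := hLinv t ht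
      exact ⟨fun hd => by have := hα1 hd; omega, fun hd => by have := hα2 hd; omega⟩
    obtain ⟨DS, hDS, hDSval⟩ := itemSum_hasD hO hv s d L hp hp0 hLcond
    have hlead := hDr.mul hA.hasFDerivAt
    have hΦ := hlead.add hDS
    have hev : D3 α (fun q => rho3 q ^ s * v q)
        =ᶠ[nhds p] (fun q => rho3 q ^ s * D3 α v q + itemSum v s L q) := by
      filter_upwards [hO.mem_nhds hp] with q hq using hexp v hv q hq
    simp only [Pi.add_def, Pi.mul_def] at hΦ; rw [hrw, hev.fderiv_eq, hΦ.fderiv]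
    have hAval : fderiv ℝ (D3 α v) p (dir3 d) = D3 (bump3 d α) v p := by
      rw [← pd3_eq_fderiv, ← D3_bump d α v hα1 hα2]
    have hDrval : Dr (dir3 d) * D3 α v p = itemF v s (1, [(s, dmono d)], α) p := by
      fin_cases d <;>
        simp only [dir3, hrx, hry, hrz, itemF, SymRep_cons, SymRep_nil, add_zero, term,
          dmono, bump3, mono, wt3] <;>
      · push_cast
        ring_nf
    simp only [ContinuousLinearMap.add_apply, ContinuousLinearMap.coe_smul', Pi.smul_apply,
      smul_eq_mul, hAval, hDSval, itemSum_cons]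
    rw [← hDrval]
    ring

lemma EXP {O : Set P3} (hO : IsOpen O) (hO0 : ∀ p ∈ O, p ≠ (0:P3))
    (s : ℝ) (α : ℕ × ℕ × ℕ) :
    ∃ L : List Item, ExpInv α L ∧
      ∀ v : P3 → ℝ, ContDiffOn ℝ (⊤:ℕ∞) v O → ∀ p ∈ O,
        D3 α (fun q => rho3 q ^ s * v q) p
        = rho3 p ^ s * D3 α v p + itemSum v s L p := by
  obtain ⟨a, b, k⟩ := α
  induction a with
  | zero =>
    induction b with
    | zero =>
      induction k with
      | zero =>
        refine ⟨[], fun t ht => absurd ht List.not_mem_nil, fun v hv p hp => by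
          simp [D3]⟩
      | succ k ih =>
        obtain ⟨L, hinv, hexp⟩ := ih
        obtain ⟨L', hinv', hexp'⟩ := exp_step hO hO0 s (0,0,k) 2
          (fun _ => rfl) (fun _ => rfl) L hinv hexp
        exact ⟨L', hinv', hexp'⟩
    | succ b ih =>
      obtain ⟨L, hinv, hexp⟩ := ih
      obtain ⟨L', hinv', hexp'⟩ := exp_step hO hO0 s (0,b,k) 1
        (fun _ => rfl) (fun h => absurd h (by norm_num)) L hinv hexp
      exact ⟨L', hinv', hexp'⟩
  | succ a ih =>
    obtain ⟨L, hinv, hexp⟩ := ih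
    obtain ⟨L', hinv', hexp'⟩ := exp_step hO hO0 s (a,b,k) 0
      (fun h => absurd h (by norm_num)) (fun h => absurd h (by norm_num)) L hinv hexp
    exact ⟨L', hinv', hexp'⟩

def idx3' (m : ℕ) : Finset (ℕ × ℕ × ℕ) :=
  ((Finset.range (m+1)) ×ˢ (Finset.range (m+1)) ×ˢ (Finset.range (m+1))).filter
    fun α => wt3 α ≤ m

lemma mem_idx3' {m : ℕ} {α : ℕ × ℕ × ℕ} (h : wt3 α ≤ m) : α ∈ idx3' m := by
  obtain ⟨a, b, k⟩ := α
  simp only [idx3', Finset.mem_filter, Finset.mem_product, Finset.mem_range]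
  have hw : wt3 (a, b, k) = a + b + k := rfl
  rw [hw] at h ⊢
  refine ⟨⟨?_, ?_, ?_⟩, h⟩ <;> omega

lemma idx3'_subset {k l : ℕ} (h : k ≤ l) : idx3' k ⊆ idx3' l := by
  intro α hα
  simp only [idx3', Finset.mem_filter, Finset.mem_product, Finset.mem_range] at *
  obtain ⟨⟨h1, h2, h3⟩, h4⟩ := hα
  refine ⟨⟨?_, ?_, ?_⟩, ?_⟩ <;> omega

def Gfun (v : P3 → ℝ) (aR : ℝ) (k : ℕ) (p : P3) : ℝ :=
  ∑ β ∈ idx3' k, |D3 β (fun q => rho3 q ^ ((wt3 β : ℝ) - aR) * v q) p|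

lemma Gfun_nonneg (v : P3 → ℝ) (aR : ℝ) (k : ℕ) (p : P3) : 0 ≤ Gfun v aR k p :=
  Finset.sum_nonneg fun _ _ => abs_nonneg _

lemma Gfun_mono (v : P3 → ℝ) (aR : ℝ) {k l : ℕ} (h : k ≤ l) (p : P3) :
    Gfun v aR k p ≤ Gfun v aR l p :=
  Finset.sum_le_sum_of_subset_of_nonneg (idx3'_subset h) (fun _ _ _ => abs_nonneg _)

lemma list_abs_bound {ι X : Type*} (S : Set X) (L : List ι) (f : ι → X → ℝ) (G : X → ℝ)
    (h : ∀ t ∈ L, ∃ K : ℝ, 0 ≤ K ∧ ∀ x ∈ S, |f t x| ≤ K * G x) :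
    ∃ K : ℝ, 0 ≤ K ∧ ∀ x ∈ S, |(L.map (fun t => f t x)).sum| ≤ K * G x := by
  induction L with
  | nil => exact ⟨0, le_refl _, fun x hx => by simp⟩
  | cons t L ih =>
    obtain ⟨K1, hK1, hb1⟩ := h t List.mem_cons_self
    obtain ⟨K2, hK2, hb2⟩ := ih (fun t' ht' => h t' (List.mem_cons_of_mem _ ht'))
    refine ⟨K1 + K2, by positivity, fun x hx => ?_⟩
    calc |((t :: L).map (fun t => f t x)).sum| ≤ |f t x| + |(L.map (fun t => f t x)).sum| := by
          simp only [List.map_cons, List.sum_cons]; exact abs_add_le _ _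
      _ ≤ K1 * G x + K2 * G x := add_le_add (hb1 x hx) (hb2 x hx)
      _ = (K1 + K2) * G x := by ring

lemma CLAIM {O : Set P3} (hO : IsOpen O) (hO0 : ∀ p ∈ O, p ≠ (0:P3)) (aR : ℝ) :
    ∀ (n : ℕ) (α : ℕ × ℕ × ℕ), wt3 α = n → ∃ C : ℝ, 0 ≤ C ∧
      ∀ v : P3 → ℝ, ContDiffOn ℝ (⊤:ℕ∞) v O → ∀ p ∈ O,
      |rho3 p ^ ((wt3 α : ℝ) - aR) * D3 α v p| ≤ C * Gfun v aR (wt3 α) p := by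
  intro n
  induction n using Nat.strong_induction_on with
  | _ n ih =>
    intro α hα
    obtain ⟨L, hinv, hexp⟩ := EXP hO hO0 ((wt3 α : ℝ) - aR) α
    set S : Set ((P3 → ℝ) × P3) := {x | ContDiffOn ℝ (⊤:ℕ∞) x.1 O ∧ x.2 ∈ O} with hS
    have hitem : ∀ t ∈ L, ∃ K : ℝ, 0 ≤ K ∧ ∀ x ∈ S,
        |itemF x.1 ((wt3 α : ℝ) - aR) t x.2| ≤ K * Gfun x.1 aR (wt3 α) x.2 := by
      intro t ht
      obtain ⟨h1, h2, h3, h4, h5⟩ := hinv t ht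
      obtain ⟨j, M, γ⟩ := t
      obtain ⟨CM, hCM, hCMb⟩ := symRep_bound ((wt3 α : ℝ) - aR) j M
      have hwγ : wt3 γ < n := by simp only at h1 h2; omega
      obtain ⟨Cγ, hCγ, hCγb⟩ := ih (wt3 γ) hwγ γ rfl
      refine ⟨CM * Cγ, by positivity, fun x hx => ?_⟩
      obtain ⟨hv, hp⟩ := hx
      obtain ⟨v, p⟩ := x
      have hp0 : p ≠ 0 := hO0 p hp
      have hrpos := rho3_pos hp0
      have hse : (wt3 α : ℝ) - aR - (j:ℝ) = (wt3 γ : ℝ) - aR := by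
        simp only at h2
        have : (j:ℝ) + (wt3 γ:ℝ) = (wt3 α:ℝ) := by exact_mod_cast congrArg Nat.cast h2
        linarith
      have step1 : |itemF v ((wt3 α : ℝ) - aR) (j, M, γ) p|
          ≤ CM * |rho3 p ^ ((wt3 γ : ℝ) - aR) * D3 γ v p| := by
        rw [itemF, abs_mul, abs_mul]
        have hb := hCMb p hp0
        rw [hse] at hb
        have habs : |rho3 p ^ ((wt3 γ : ℝ) - aR)| = rho3 p ^ ((wt3 γ : ℝ) - aR) :=
          abs_of_pos (Real.rpow_pos_of_pos hrpos _)
        rw [habs]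
        calc |SymRep ((wt3 α : ℝ) - aR) j M p| * |D3 γ v p|
            ≤ (CM * rho3 p ^ ((wt3 γ : ℝ) - aR)) * |D3 γ v p| :=
              mul_le_mul_of_nonneg_right hb (abs_nonneg _)
          _ = CM * (rho3 p ^ ((wt3 γ : ℝ) - aR) * |D3 γ v p|) := by ring
      refine step1.trans ?_
      have step2 := hCγb v hv p hp
      calc CM * |rho3 p ^ ((wt3 γ : ℝ) - aR) * D3 γ v p|
          ≤ CM * (Cγ * Gfun v aR (wt3 γ) p) := by
            exact mul_le_mul_of_nonneg_left step2 hCM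
        _ ≤ CM * (Cγ * Gfun v aR (wt3 α) p) := by
            have := Gfun_mono v aR (le_of_lt (hwγ.trans_eq hα.symm)) p
            have h2' : Cγ * Gfun v aR (wt3 γ) p ≤ Cγ * Gfun v aR (wt3 α) p :=
              mul_le_mul_of_nonneg_left this hCγ
            exact mul_le_mul_of_nonneg_left h2' hCM
        _ = CM * Cγ * Gfun v aR (wt3 α) p := by ring
    obtain ⟨K, hK, hKb⟩ := list_abs_bound S L
      (fun t x => itemF x.1 ((wt3 α : ℝ) - aR) t x.2)
      (fun x => Gfun x.1 aR (wt3 α) x.2) hitem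
    refine ⟨1 + K, by positivity, fun v hv p hp => ?_⟩
    have hId := hexp v hv p hp
    have h1 : rho3 p ^ ((wt3 α : ℝ) - aR) * D3 α v p
        = D3 α (fun q => rho3 q ^ ((wt3 α : ℝ) - aR) * v q) p
          - itemSum v ((wt3 α : ℝ) - aR) L p := by
      rw [hId]; ring
    rw [h1]
    have hG1 : |D3 α (fun q => rho3 q ^ ((wt3 α : ℝ) - aR) * v q) p| ≤ Gfun v aR (wt3 α) p := by
      exact Finset.single_le_sum (f := fun β =>
        |D3 β (fun q => rho3 q ^ ((wt3 β : ℝ) - aR) * v q) p|)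
        (fun _ _ => abs_nonneg _) (mem_idx3' (le_refl _))
    have hG2 : |itemSum v ((wt3 α : ℝ) - aR) L p| ≤ K * Gfun v aR (wt3 α) p := by
      have := hKb (v, p) ⟨hv, hp⟩
      simpa [itemSum] using this
    calc |D3 α (fun q => rho3 q ^ ((wt3 α : ℝ) - aR) * v q) p
          - itemSum v ((wt3 α : ℝ) - aR) L p|
        ≤ |D3 α (fun q => rho3 q ^ ((wt3 α : ℝ) - aR) * v q) p|
          + |itemSum v ((wt3 α : ℝ) - aR) L p| := abs_sub _ _
      _ ≤ Gfun v aR (wt3 α) p + K * Gfun v aR (wt3 α) p := add_le_add hG1 hG2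
      _ = (1 + K) * Gfun v aR (wt3 α) p := by ring

lemma vol0 : (volume ({(0:P3)} : Set P3)) = 0 := by
  have h1 : ({(0:P3)} : Set P3) = ({0} : Set ℝ) ×ˢ (({0} : Set ℝ) ×ˢ ({0} : Set ℝ)) := by
    have : (0:P3) = ((0:ℝ),(0:ℝ),(0:ℝ)) := rfl
    rw [this]
    simp [Set.singleton_prod_singleton]
  rw [h1, Measure.volume_eq_prod, Measure.prod_prod, Real.volume_singleton]
  simp

lemma idx3_eq_idx3' (m : ℕ) : idx3 m = idx3' m := rfl

lemma mem_idx3e_self (β : ℕ × ℕ × ℕ) : β ∈ idx3e (wt3 β) := by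
  obtain ⟨a, b, k⟩ := β
  simp only [idx3e, Finset.mem_filter, Finset.mem_product, Finset.mem_range]
  have hw : wt3 (a, b, k) = a + b + k := rfl
  rw [hw]
  exact ⟨by omega, trivial⟩

lemma idx3e_eq_filter {l m : ℕ} (h : l ≤ m) :
    idx3e l = (idx3' m).filter (fun β => wt3 β = l) := by
  ext ⟨a, b, k⟩
  simp only [idx3e, idx3', Finset.mem_filter, Finset.mem_product, Finset.mem_range]
  have hw : wt3 ((a, b, k) : ℕ×ℕ×ℕ) = a + b + k := rfl
  rw [hw]
  omega

/-- Σ_{|α|≤m} ‖ρ^{-a+|α|} ∂^α v‖²_{L²(V)} ≤ C Σ_{l≤m} |ρ^{-a+l} v|²_{H^l(V)},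
with C depending only on m, a and V. -/
theorem stmt_4 (V : Set P3) (hVo : IsOpen V) (hVb : Bornology.IsBounded V)
    (h0 : (0 : P3) ∈ V) (m : ℕ) (a : ℝ) :
    ∃ C > 0, ∀ v : P3 → ℝ, ContDiffOn ℝ (⊤ : ℕ∞) v (V \ {0}) →
      (∀ l ≤ m, ∀ α ∈ idx3e l,
        Integrable (fun p => (D3 α (fun q => rho3 q ^ ((l : ℝ) - a) * v q) p) ^ 2)
          (volume.restrict V)) →
      WS3 V m a v
        ≤ C * ∑ l ∈ Finset.range (m+1),
            SN3 V l (fun q => rho3 q ^ ((l : ℝ) - a) * v q) := by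
  classical
  set O : Set P3 := V \ {0} with hOdef
  have hOopen : IsOpen O := hVo.sdiff isClosed_singleton
  have hO0 : ∀ p ∈ O, p ≠ (0:P3) := fun p hp h => hp.2 (by simp [h])
  -- constants from the pointwise claim
  have hCex : ∀ α : ℕ × ℕ × ℕ, ∃ C : ℝ, 0 ≤ C ∧
      ∀ v : P3 → ℝ, ContDiffOn ℝ (⊤:ℕ∞) v O → ∀ p ∈ O,
      |rho3 p ^ ((wt3 α : ℝ) - a) * D3 α v p| ≤ C * Gfun v a (wt3 α) p :=
    fun α => CLAIM hOopen hO0 a (wt3 α) α rfl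
  choose C0 hC0 hC0b using hCex
  set N : ℝ := ((idx3' m).card : ℝ) with hN
  have hNnn : 0 ≤ N := by positivity
  set Cfin : ℝ := 1 + ∑ α ∈ idx3 m, (C0 α)^2 * N with hCfin
  have hsum_nn : 0 ≤ ∑ α ∈ idx3 m, (C0 α)^2 * N :=
    Finset.sum_nonneg fun α _ => by positivity
  refine ⟨Cfin, by linarith, ?_⟩
  intro v hv hint
  have hvO : ContDiffOn ℝ (⊤:ℕ∞) v O := hv
  -- dominating function
  set H : P3 → ℝ := fun p => ∑ β ∈ idx3' m, (D3 β (fun q => rho3 q ^ ((wt3 β : ℝ) - a) * v q) p)^2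
    with hHdef
  have hHint : Integrable H (volume.restrict V) := by
    apply integrable_finset_sum
    intro β hβ
    have hwt : wt3 β ≤ m := by
      simp only [idx3', Finset.mem_filter] at hβ; exact hβ.2
    exact hint (wt3 β) hwt β (mem_idx3e_self β)
  have hHnn : ∀ p, 0 ≤ H p := fun p => Finset.sum_nonneg fun _ _ => sq_nonneg _
  -- a.e. facts
  have h0restr : (volume.restrict V) ({(0:P3)} : Set P3) = 0 := by
    rw [Measure.restrict_apply (MeasurableSet.singleton _)]
    exact measure_mono_null Set.inter_subset_left vol0
  have hae0 : ∀ᵐ p ∂(volume.restrict V), p ≠ (0:P3) := by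
    rw [ae_iff]
    convert h0restr using 2
    ext p; simp
  have haeV : ∀ᵐ p ∂(volume.restrict V), p ∈ V :=
    ae_restrict_mem hVo.measurableSet
  -- per-α integral bound
  have hkey : ∀ α ∈ idx3 m,
      (∫ p in V, (rho3 p ^ ((wt3 α : ℝ) - a) * D3 α v p) ^ 2)
        ≤ (C0 α)^2 * N * ∫ p in V, H p := by
    intro α hα
    have hwtα : wt3 α ≤ m := by
      simp only [idx3, Finset.mem_filter] at hα; exact hα.2
    have hgi : Integrable (fun p => (C0 α)^2 * N * H p) (volume.restrict V) :=
      hHint.const_mul _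
    have hmono := integral_mono_of_nonneg (f := fun p => (rho3 p ^ ((wt3 α : ℝ) - a) * D3 α v p) ^ 2)
      (g := fun p => (C0 α)^2 * N * H p) (Filter.Eventually.of_forall fun p => sq_nonneg _)
      hgi ?_
    · calc (∫ p in V, (rho3 p ^ ((wt3 α : ℝ) - a) * D3 α v p) ^ 2)
          ≤ ∫ p in V, (C0 α)^2 * N * H p := hmono
        _ = (C0 α)^2 * N * ∫ p in V, H p := by
            rw [integral_const_mul]
    · filter_upwards [hae0, haeV] with p hp0 hpV
      have hpO : p ∈ O := ⟨hpV, by simpa using hp0⟩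
      have hb := hC0b α v hvO p hpO
      have h1 : (rho3 p ^ ((wt3 α : ℝ) - a) * D3 α v p) ^ 2
          ≤ (C0 α * Gfun v a (wt3 α) p)^2 := by
        rw [← sq_abs]
        apply pow_le_pow_left₀ (abs_nonneg _) hb
      refine h1.trans ?_
      have hGm : Gfun v a (wt3 α) p ≤ Gfun v a m p := Gfun_mono v a hwtα p
      have h2 : (C0 α * Gfun v a (wt3 α) p)^2 ≤ (C0 α)^2 * (Gfun v a m p)^2 := by
        rw [mul_pow]
        apply mul_le_mul_of_nonneg_left _ (sq_nonneg _)
        apply pow_le_pow_left₀ (Gfun_nonneg _ _ _ _) hGm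
      refine h2.trans ?_
      have h3 : (Gfun v a m p)^2 ≤ N * H p := by
        have hcs := Finset.sum_mul_sq_le_sq_mul_sq (idx3' m) (fun _ => (1:ℝ))
          (fun β => |D3 β (fun q => rho3 q ^ ((wt3 β : ℝ) - a) * v q) p|)
        simp only [one_mul, one_pow] at hcs
        have hGeq : Gfun v a m p
            = ∑ β ∈ idx3' m, |D3 β (fun q => rho3 q ^ ((wt3 β : ℝ) - a) * v q) p| := rfl
        have hHeq : H p
            = ∑ β ∈ idx3' m, |D3 β (fun q => rho3 q ^ ((wt3 β : ℝ) - a) * v q) p| ^ 2 := by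
          rw [hHdef]
          exact Finset.sum_congr rfl fun β _ => (sq_abs _).symm
        rw [hGeq, hHeq, hN]
        calc (∑ β ∈ idx3' m, |D3 β (fun q => rho3 q ^ ((wt3 β : ℝ) - a) * v q) p|) ^ 2
            ≤ (∑ _β ∈ idx3' m, (1:ℝ)) * ∑ β ∈ idx3' m,
              |D3 β (fun q => rho3 q ^ ((wt3 β : ℝ) - a) * v q) p| ^ 2 := hcs
          _ = ((idx3' m).card : ℝ) * ∑ β ∈ idx3' m,
              |D3 β (fun q => rho3 q ^ ((wt3 β : ℝ) - a) * v q) p| ^ 2 := by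
              simp
      calc (C0 α)^2 * (Gfun v a m p)^2 ≤ (C0 α)^2 * (N * H p) :=
            mul_le_mul_of_nonneg_left h3 (sq_nonneg _)
        _ = (C0 α)^2 * N * H p := by ring
  -- integral of H equals the RHS sum
  have hHeqRHS : (∫ p in V, H p)
      = ∑ l ∈ Finset.range (m+1), SN3 V l (fun q => rho3 q ^ ((l : ℝ) - a) * v q) := by
    have hint' : ∀ β ∈ idx3' m, Integrable
        (fun p => (D3 β (fun q => rho3 q ^ ((wt3 β : ℝ) - a) * v q) p)^2) (volume.restrict V) := by
      intro β hβ
      have hwt : wt3 β ≤ m := by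
        simp only [idx3', Finset.mem_filter] at hβ; exact hβ.2
      exact hint (wt3 β) hwt β (mem_idx3e_self β)
    rw [hHdef]
    rw [integral_finset_sum _ hint']
    have hfib := Finset.sum_fiberwise_of_maps_to (s := idx3' m) (t := Finset.range (m+1))
      (g := wt3) (fun β hβ => by
        simp only [idx3', Finset.mem_filter] at hβ
        exact Finset.mem_range.2 (by omega))
      (fun β => ∫ p in V, (D3 β (fun q => rho3 q ^ ((wt3 β : ℝ) - a) * v q) p)^2)
    rw [← hfib]
    apply Finset.sum_congr rfl
    intro l hl
    have hlm : l ≤ m := by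
      have := Finset.mem_range.1 hl; omega
    rw [SN3, idx3e_eq_filter hlm]
    apply Finset.sum_congr rfl
    intro β hβ
    have hwl : wt3 β = l := (Finset.mem_filter.1 hβ).2
    rw [hwl]
  -- conclusion
  have hRHSnn : 0 ≤ ∫ p in V, H p := integral_nonneg hHnn
  calc WS3 V m a v ≤ ∑ α ∈ idx3 m, (C0 α)^2 * N * ∫ p in V, H p := by
        rw [WS3]
        exact Finset.sum_le_sum hkey
    _ = (∑ α ∈ idx3 m, (C0 α)^2 * N) * ∫ p in V, H p := by
        rw [Finset.sum_mul]
    _ ≤ Cfin * ∫ p in V, H p := by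
        apply mul_le_mul_of_nonneg_right _ hRHSnn
        rw [hCfin]; linarith
    _ = Cfin * ∑ l ∈ Finset.range (m+1), SN3 V l (fun q => rho3 q ^ ((l : ℝ) - a) * v q) := by
        rw [hHeqRHS]
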